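/- Let a_i = i(N+P) and b_i = a_i + P for fixed naturals N, P, and define E_β = { x ∈ X : for all i and a_i ≤ j ≤ b_i, d(f^j(x), f^{j−a_i}(t_{β_i})) ≤ ε/2 }, where d(Orb(t_0), Orb(t_1)) > 2ε. If β ∈ {0,1}^ω is not periodic (under the shift), then E_β contains no periodic points of f. -/
import Mathlib


theorem E_beta_no_periodic_points {X : Type*} [MetricSpace X] (f : X → X)
    (t : Bool → X) (ε : ℝ) (hε : 0 < ε) (N P : ℕ)
    (horb : 2 * ε < ⨅ m : ℕ, ⨅ n : ℕ, dist (f^[m] (t false)) (f^[n] (t true)))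
    (β : ℕ → Bool) (hβ : ¬ ∃ m : ℕ, 1 ≤ m ∧ ∀ i : ℕ, β (i + m) = β i)
    (q : X)
    (hq : ∀ i : ℕ, ∀ j : ℕ, i * (N + P) ≤ j → j ≤ i * (N + P) + P →
      dist (f^[j] q) (f^[j - i * (N + P)] (t (β i))) ≤ ε / 2) :
    ¬ ∃ K : ℕ, 1 ≤ K ∧ f^[K] q = q := by
  rintro ⟨K, hK1, hKq⟩
  apply hβ
  refine ⟨K, hK1, fun i => ?_⟩
  have h1 : dist (f^[i * (N + P)] q) (t (β i)) ≤ ε / 2 := by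
    have := hq i (i * (N + P)) le_rfl (Nat.le_add_right _ _)
    simpa using this
  have h2 : dist (f^[(i + K) * (N + P)] q) (t (β (i + K))) ≤ ε / 2 := by
    have := hq (i + K) ((i + K) * (N + P)) le_rfl (Nat.le_add_right _ _)
    simpa using this
  have hfix : f^[K * (N + P)] q = q := by
    rw [Function.iterate_mul]
    exact Function.iterate_fixed hKq (N + P)
  have heq : f^[(i + K) * (N + P)] q = f^[i * (N + P)] q := by
    rw [add_mul, Function.iterate_add_apply, hfix]
  rw [heq] at h2
  have hd : dist (t (β (i + K))) (t (β i)) ≤ ε :=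
    calc dist (t (β (i + K))) (t (β i))
        ≤ dist (t (β (i + K))) (f^[i * (N + P)] q) + dist (f^[i * (N + P)] q) (t (β i)) :=
          dist_triangle _ _ _
      _ ≤ ε / 2 + ε / 2 := add_le_add (by rw [dist_comm]; exact h2) h1
      _ = ε := by ring
  by_contra hne
  have hdist : 2 * ε < dist (t false) (t true) := by
    have hb : ∀ m : ℕ, BddBelow (Set.range fun n : ℕ => dist (f^[m] (t false)) (f^[n] (t true))) :=
      fun m => ⟨0, by rintro x ⟨n, rfl⟩; exact dist_nonneg⟩
    have hb2 : BddBelow (Set.range fun m : ℕ => ⨅ n : ℕ, dist (f^[m] (t false)) (f^[n] (t true))) := by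
      refine ⟨0, ?_⟩
      rintro x ⟨m, rfl⟩
      exact Real.iInf_nonneg fun n => dist_nonneg
    calc 2 * ε < ⨅ m : ℕ, ⨅ n : ℕ, dist (f^[m] (t false)) (f^[n] (t true)) := horb
      _ ≤ ⨅ n : ℕ, dist (f^[0] (t false)) (f^[n] (t true)) := ciInf_le hb2 0
      _ ≤ dist (f^[0] (t false)) (f^[0] (t true)) := ciInf_le (hb 0) 0
      _ = dist (t false) (t true) := by simp
  have hεε : dist (t false) (t true) ≤ ε := by
    cases hb1 : β (i + K) <;> cases hb2 : β i <;>
      simp [hb1, hb2] at hne <;> rw [hb1, hb2] at hd <;>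
      first | exact hd | (rw [dist_comm]; exact hd)
  linarith
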